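/- Let F, G ⊆ [ℕ]^{<∞} be regular families (hereditary, spreading, compact). Then the family F[G] = { G_1 ∪ ⋯ ∪ G_k : G_i ∈ G, G_1 < ⋯ < G_k, (min G_i)_{i=1}^k ∈ F } is regular. -/

import Mathlib

open Filter

/-- The characteristic function of a finite set, as an element of the Cantor
space `2^ℕ = ℕ → Bool`. -/
def charFun (A : Finset ℕ) : ℕ → Bool := fun n => decide (n ∈ A)

/-- A family of finite subsets of `ℕ` is hereditary if it is closed under subsets. -/
def IsHereditaryFam (F : Set (Finset ℕ)) : Prop :=
  ∀ A ∈ F, ∀ B ⊆ A, B ∈ F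

/-- A family is spreading if it is closed under moving elements to the right. -/
def IsSpreadingFam (F : Set (Finset ℕ)) : Prop :=
  ∀ A ∈ F, ∀ φ : ℕ → ℕ,
    (∀ a ∈ A, ∀ b ∈ A, a < b → φ a < φ b) → (∀ a ∈ A, a ≤ φ a) →
      A.image φ ∈ F

/-- A family is compact if it is compact (equivalently, closed) as a subset of
`2^ℕ` with the product topology. -/
def IsCompactFam (F : Set (Finset ℕ)) : Prop := IsClosed (charFun '' F)

/-- A regular family: hereditary, spreading and compact. -/
def IsRegularFam (F : Set (Finset ℕ)) : Prop :=
  IsHereditaryFam F ∧ IsSpreadingFam F ∧ IsCompactFam F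

/-- `famComp F G = F[G] = { G_1 ∪ ⋯ ∪ G_k : G_i ∈ G, G_1 < ⋯ < G_k,
(min G_i)_{i=1}^k ∈ F }`. -/
def famComp (F G : Set (Finset ℕ)) : Set (Finset ℕ) :=
  {H | ∃ (k : ℕ) (Gs : Fin k → Finset ℕ) (mins : Fin k → ℕ),
    (∀ i, Gs i ∈ G) ∧
    (∀ i, mins i ∈ Gs i) ∧
    (∀ i, ∀ a ∈ Gs i, mins i ≤ a) ∧
    (∀ i j : Fin k, i < j → ∀ a ∈ Gs i, ∀ b ∈ Gs j, a < b) ∧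
    Finset.image mins Finset.univ ∈ F ∧
    H = Finset.univ.biUnion Gs}

/-- The first Schreier family `S_1 = { A : |A| ≤ min A }` (on positive integers:
note `0 ∈ A` is impossible for nonempty members). -/
def SchreierOne : Set (Finset ℕ) := {A | ∀ n ∈ A, A.card ≤ n}

/-- The Schreier families `S_n`: `S_0` consists of singletons (of positive
integers) and `∅`, and `S_{n+1} = S_1[S_n]`. -/
def Schreier : ℕ → Set (Finset ℕ)
  | 0 => {A | A.card ≤ 1 ∧ 0 ∉ A}
  | n + 1 => famComp SchreierOne (Schreier n)

def HasBadSeq (𝓕 : Set (Finset ℕ)) : Prop :=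
  ∃ f : ℕ → ℕ, StrictMono f ∧ ∀ n, (Finset.range n).image f ∈ 𝓕

lemma basicNbhd_mem (x : ℕ → Bool) (m : ℕ) :
    {g : ℕ → Bool | ∀ j < m, g j = x j} ∈ nhds x := by
  have h : {g : ℕ → Bool | ∀ j < m, g j = x j}
      = ⋂ j ∈ Set.Iio m, (fun g : ℕ → Bool => g j) ⁻¹' {x j} := by
    ext g; simp
  rw [h]
  refine (Filter.biInter_mem (Set.finite_Iio m)).2 fun j _ => ?_
  exact IsOpen.mem_nhds ((isOpen_discrete {x j}).preimage (continuous_apply j)) rfl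

lemma not_hasBadSeq {𝓕 : Set (Finset ℕ)} (hc : IsClosed (charFun '' 𝓕)) :
    ¬ HasBadSeq 𝓕 := by
  rintro ⟨f, hf, hmem⟩
  classical
  set x : ℕ → Bool := fun m => decide (m ∈ Set.range f) with hx
  have htd : Filter.Tendsto (fun n => charFun ((Finset.range n).image f)) atTop (nhds x) := by
    rw [tendsto_pi_nhds]
    intro m
    apply Filter.Tendsto.congr' _ tendsto_const_nhds
    by_cases h : m ∈ Set.range f
    · obtain ⟨i, rfl⟩ := h
      filter_upwards [eventually_ge_atTop (i + 1)] with n hn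
      have h1 : x (f i) = true := by simp [hx]
      have h2 : charFun ((Finset.range n).image f) (f i) = true := by
        simp only [charFun, decide_eq_true_eq]
        exact Finset.mem_image_of_mem f (Finset.mem_range.2 hn)
      rw [h1, h2]
    · filter_upwards with n
      have h1 : x m = false := by simpa [hx] using h
      have h2 : charFun ((Finset.range n).image f) m = false := by
        simp only [charFun, decide_eq_false_iff_not, Finset.mem_image]
        rintro ⟨i, -, rfl⟩
        exact h ⟨i, rfl⟩
      rw [h1, h2]
  have hmem' : x ∈ charFun '' 𝓕 := by
    refine hc.mem_of_tendsto htd ?_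
    filter_upwards with n
    exact ⟨_, hmem n, rfl⟩
  obtain ⟨B, -, hBx⟩ := hmem'
  have hsub : Set.range f ⊆ (↑B : Set ℕ) := by
    rintro a ⟨i, rfl⟩
    have : charFun B (f i) = true := by rw [hBx]; simp [hx]
    simpa [charFun] using this
  exact (Set.infinite_range_of_injective hf.injective).mono hsub B.finite_toSet

lemma isClosed_of_not_bad {𝓕 : Set (Finset ℕ)} (hh : IsHereditaryFam 𝓕)
    (hb : ¬ HasBadSeq 𝓕) : IsClosed (charFun '' 𝓕) := by
  refine isClosed_of_closure_subset fun x hx => ?_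
  have key : ∀ m : ℕ, ∃ A ∈ 𝓕, ∀ j < m, charFun A j = x j := by
    intro m
    obtain ⟨g, hg1, A, hA, rfl⟩ := mem_closure_iff_nhds.1 hx _ (basicNbhd_mem x m)
    exact ⟨A, hA, hg1⟩
  by_cases hS : {m | x m = true}.Finite
  · refine ⟨hS.toFinset, ?_, ?_⟩
    · obtain ⟨m, hm⟩ := hS.toFinset.exists_nat_subset_range
      obtain ⟨A, hA, hAg⟩ := key m
      refine hh A hA _ fun a ha => ?_
      have h1 : x a = true := by simpa using (hS.mem_toFinset.1 ha)
      have h2 : charFun A a = true := by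
        rw [hAg a (Finset.mem_range.1 (hm ha))]; exact h1
      simpa [charFun] using h2
    · funext m
      by_cases h : x m = true
      · simp [charFun, hS.mem_toFinset, h]
      · simp only [Bool.not_eq_true] at h
        simp [charFun, hS.mem_toFinset, h]
  · exfalso
    apply hb
    set p : ℕ → Prop := fun m => x m = true with hp
    have hinf : (setOf p).Infinite := hS
    refine ⟨Nat.nth p, Nat.nth_strictMono hinf, fun n => ?_⟩
    obtain ⟨A, hA, hAg⟩ := key (Nat.nth p n)
    refine hh A hA _ fun a ha => ?_
    obtain ⟨i, hi, rfl⟩ := Finset.mem_image.1 ha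
    have hlt : Nat.nth p i < Nat.nth p n :=
      (Nat.nth_strictMono hinf) (Finset.mem_range.1 hi)
    have h1 : charFun A (Nat.nth p i) = true := by
      rw [hAg _ hlt]; exact Nat.nth_mem_of_infinite hinf i
    simpa [charFun] using h1

lemma spreading_famComp {F G : Set (Finset ℕ)} (hFs : IsSpreadingFam F)
    (hGs : IsSpreadingFam G) : IsSpreadingFam (famComp F G) := by
  rintro H ⟨k, Gs, mins, h1, h2, h3, h4, h5, rfl⟩ φ hmono hle
  have hsub : ∀ i, ∀ a ∈ Gs i, a ∈ Finset.univ.biUnion Gs := fun i a ha =>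
    Finset.mem_biUnion.2 ⟨i, Finset.mem_univ i, ha⟩
  refine ⟨k, fun i => (Gs i).image φ, fun i => φ (mins i), ?_, ?_, ?_, ?_, ?_, ?_⟩
  · intro i
    exact hGs _ (h1 i) φ (fun a ha b hb hab => hmono a (hsub i a ha) b (hsub i b hb) hab)
      (fun a ha => hle a (hsub i a ha))
  · intro i; exact Finset.mem_image_of_mem φ (h2 i)
  · intro i a ha
    obtain ⟨b, hb, rfl⟩ := Finset.mem_image.1 ha
    rcases eq_or_lt_of_le (h3 i b hb) with h | h
    · simp only [h]; exact le_refl _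
    · exact le_of_lt (hmono _ (hsub i _ (h2 i)) b (hsub i b hb) h)
  · intro i j hij a ha b hb
    obtain ⟨a0, ha0, rfl⟩ := Finset.mem_image.1 ha
    obtain ⟨b0, hb0, rfl⟩ := Finset.mem_image.1 hb
    exact hmono a0 (hsub i a0 ha0) b0 (hsub j b0 hb0) (h4 i j hij a0 ha0 b0 hb0)
  · have hsm : ∀ i : Fin k, mins i ∈ Finset.univ.biUnion Gs := fun i => hsub i _ (h2 i)
    have h := hFs _ h5 φ ?_ ?_
    · have e : (Finset.image mins Finset.univ).image φ
          = Finset.image (fun i => φ (mins i)) Finset.univ := Finset.image_image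
      rwa [e] at h
    · rintro a ha b hb hab
      obtain ⟨i, -, rfl⟩ := Finset.mem_image.1 ha
      obtain ⟨j, -, rfl⟩ := Finset.mem_image.1 hb
      exact hmono _ (hsm i) _ (hsm j) hab
    · rintro a ha
      obtain ⟨i, -, rfl⟩ := Finset.mem_image.1 ha
      exact hle _ (hsm i)
  · ext a
    simp only [Finset.mem_image, Finset.mem_biUnion, Finset.mem_univ, true_and]
    constructor
    · rintro ⟨b, ⟨i, hi⟩, rfl⟩
      exact ⟨i, b, hi, rfl⟩
    · rintro ⟨i, b, hb, rfl⟩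
      exact ⟨b, ⟨i, hb⟩, rfl⟩

lemma hereditary_famComp {F G : Set (Finset ℕ)} (hFh : IsHereditaryFam F)
    (hFs : IsSpreadingFam F) (hGh : IsHereditaryFam G) :
    IsHereditaryFam (famComp F G) := by
  rintro H ⟨k, Gs, mins, h1, h2, h3, h4, h5, rfl⟩ B hB
  classical
  set s : Finset (Fin k) := Finset.univ.filter (fun i => (Gs i ∩ B).Nonempty) with hs
  set e : Fin s.card ↪o Fin k := s.orderEmbOfFin rfl with he
  have hes : ∀ i, e i ∈ s := fun i => s.orderEmbOfFin_mem rfl i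
  have hne : ∀ i : Fin s.card, (Gs (e i) ∩ B).Nonempty := fun i =>
    (Finset.mem_filter.1 (hes i)).2
  set mins' : Fin s.card → ℕ := fun i => (Gs (e i) ∩ B).min' (hne i) with hm'
  have hm'mem : ∀ i, mins' i ∈ Gs (e i) ∩ B := fun i => Finset.min'_mem _ _
  have hlt : ∀ i j : Fin s.card, i < j → mins (e i) < mins (e j) := fun i j hij =>
    h4 (e i) (e j) (e.strictMono hij) _ (h2 _) _ (h2 _)
  have hinj : ∀ i j : Fin s.card, mins (e i) = mins (e j) → i = j := by
    intro i j hij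
    rcases lt_trichotomy i j with h | h | h
    · exact absurd hij (ne_of_lt (hlt i j h))
    · exact h
    · exact absurd hij.symm (ne_of_lt (hlt j i h))
  set φ : ℕ → ℕ := fun a => if h : ∃ i, mins (e i) = a then mins' h.choose else a with hφd
  have hφ : ∀ i, φ (mins (e i)) = mins' i := by
    intro i
    have hex : ∃ j, mins (e j) = mins (e i) := ⟨i, rfl⟩
    simp only [hφd]
    rw [dif_pos hex]
    exact congrArg mins' (hinj _ _ hex.choose_spec)
  have hm'lt : ∀ i j : Fin s.card, i < j → mins' i < mins' j := fun i j hij =>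
    h4 (e i) (e j) (e.strictMono hij) _ (Finset.mem_of_mem_inter_left (hm'mem i))
      _ (Finset.mem_of_mem_inter_left (hm'mem j))
  refine ⟨s.card, fun i => Gs (e i) ∩ B, mins', ?_, hm'mem, ?_, ?_, ?_, ?_⟩
  · intro i; exact hGh _ (h1 (e i)) _ Finset.inter_subset_left
  · intro i a ha; exact Finset.min'_le _ a ha
  · intro i j hij a ha b hb
    exact h4 (e i) (e j) (e.strictMono hij) a (Finset.mem_of_mem_inter_left ha)
      b (Finset.mem_of_mem_inter_left hb)
  · have hT : Finset.image (fun i => mins (e i)) Finset.univ ∈ F := by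
      refine hFh _ h5 _ fun a ha => ?_
      obtain ⟨i, -, rfl⟩ := Finset.mem_image.1 ha
      exact Finset.mem_image_of_mem mins (Finset.mem_univ (e i))
    have h := hFs _ hT φ ?_ ?_
    · have e1 : (Finset.image (fun i => mins (e i)) Finset.univ).image φ
          = Finset.image (fun i => φ (mins (e i))) Finset.univ := Finset.image_image
      rw [e1] at h
      have e2 : Finset.image (fun i => φ (mins (e i))) Finset.univ
          = Finset.image mins' Finset.univ := by
        apply Finset.image_congr
        intro i _
        exact hφ i
      rwa [e2] at h
    · rintro a ha b hb hab
      obtain ⟨i, -, rfl⟩ := Finset.mem_image.1 ha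
      obtain ⟨j, -, rfl⟩ := Finset.mem_image.1 hb
      have hij : i < j := by
        rcases lt_trichotomy i j with h' | h' | h'
        · exact h'
        · subst h'; exact absurd hab (lt_irrefl _)
        · exact absurd hab (not_lt.2 (le_of_lt (hlt j i h')))
      rw [hφ i, hφ j]
      exact hm'lt i j hij
    · rintro a ha
      obtain ⟨i, -, rfl⟩ := Finset.mem_image.1 ha
      rw [hφ i]
      exact h3 (e i) _ (Finset.mem_of_mem_inter_left (hm'mem i))
  · ext a
    simp only [Finset.mem_biUnion, Finset.mem_univ, true_and, Finset.mem_inter]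
    constructor
    · intro ha
      have haH : a ∈ Finset.univ.biUnion Gs := hB ha
      obtain ⟨i, -, hi⟩ := Finset.mem_biUnion.1 haH
      have his : i ∈ s := Finset.mem_filter.2 ⟨Finset.mem_univ i, ⟨a, Finset.mem_inter.2 ⟨hi, ha⟩⟩⟩
      have : ∃ i', e i' = i := by
        have := Finset.range_orderEmbOfFin s (rfl : s.card = s.card)
        have hmem : i ∈ Set.range (⇑e) := by rw [he, this]; exact his
        exact hmem
      obtain ⟨i', rfl⟩ := this
      exact ⟨i', hi, ha⟩
    · rintro ⟨i, -, ha⟩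
      exact ha

lemma not_bad_famComp {F G : Set (Finset ℕ)} (hFh : IsHereditaryFam F)
    (hFc : IsCompactFam F) (hGh : IsHereditaryFam G) (hGc : IsCompactFam G) :
    ¬ HasBadSeq (famComp F G) := by
  rintro ⟨f, hf, hmem⟩
  classical
  simp only [famComp, Set.mem_setOf_eq] at hmem
  choose k Gs mins h1 h2 h3 h4 h5 hH using hmem
  set seq : ℕ → ℕ → Bool := fun n j => decide (j < n ∧ ∃ i, f j = mins n i) with hseq
  obtain ⟨x, hx⟩ := exists_clusterPt_of_compactSpace (Filter.map seq atTop)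
  have key : ∀ m N : ℕ, ∃ n, N ≤ n ∧ ∀ j < m, seq n j = x j := by
    intro m N
    have hV : seq '' Set.Ici N ∈ Filter.map seq atTop :=
      Filter.image_mem_map (Filter.Ici_mem_atTop N)
    obtain ⟨g, hg1, hg2⟩ := clusterPt_iff_nonempty.1 hx (basicNbhd_mem x m) hV
    obtain ⟨n, hn, rfl⟩ := hg2
    exact ⟨n, hn, fun j hj => hg1 j hj⟩
  set C : Set ℕ := {j | x j = true} with hC
  have hfam : ∀ T : Finset ℕ, (↑T : Set ℕ) ⊆ C → T.image f ∈ F := by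
    intro T hT
    obtain ⟨m, hm⟩ := T.exists_nat_subset_range
    obtain ⟨n, hn, hagree⟩ := key m m
    refine hFh _ (h5 n) _ fun a ha => ?_
    obtain ⟨j, hj, rfl⟩ := Finset.mem_image.1 ha
    have hjm : j < m := Finset.mem_range.1 (hm hj)
    have hjt : seq n j = true := by
      rw [hagree j hjm]; exact hT (Finset.mem_coe.2 hj)
    rw [hseq] at hjt
    simp only [decide_eq_true_eq] at hjt
    obtain ⟨-, i, hi⟩ := hjt
    rw [hi]; exact Finset.mem_image_of_mem _ (Finset.mem_univ i)
  by_cases hCinf : C.Infinite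
  · apply not_hasBadSeq hFc
    set p : ℕ → Prop := fun j => x j = true with hp
    have hinf : (setOf p).Infinite := hCinf
    refine ⟨f ∘ Nat.nth p, hf.comp (Nat.nth_strictMono hinf), fun r => ?_⟩
    have e1 : (Finset.range r).image (f ∘ Nat.nth p)
        = ((Finset.range r).image (Nat.nth p)).image f := (Finset.image_image).symm
    rw [e1]
    refine hfam _ fun a ha => ?_
    simp only [Finset.coe_image] at ha
    obtain ⟨i, -, rfl⟩ := ha
    exact Nat.nth_mem_of_infinite hinf i
  · have hCfin : C.Finite := Set.not_infinite.1 hCinf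
    have h0 : ∀ n, 1 ≤ n → seq n 0 = true := by
      intro n hn
      rw [hseq]; simp only [decide_eq_true_eq]
      refine ⟨hn, ?_⟩
      have hf0 : f 0 ∈ (Finset.range n).image f :=
        Finset.mem_image_of_mem f (Finset.mem_range.2 hn)
      rw [hH n] at hf0
      obtain ⟨i, -, hi⟩ := Finset.mem_biUnion.1 hf0
      refine ⟨i, le_antisymm ?_ (h3 n i _ hi)⟩
      have hmi : mins n i ∈ (Finset.range n).image f := by
        rw [hH n]; exact Finset.mem_biUnion.2 ⟨i, Finset.mem_univ i, h2 n i⟩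
      obtain ⟨j, -, hj⟩ := Finset.mem_image.1 hmi
      rw [← hj]; exact hf.monotone (Nat.zero_le j)
    have h0C : (0 : ℕ) ∈ C := by
      obtain ⟨n, hn, hagree⟩ := key 1 1
      exact (hagree 0 (by norm_num)).symm.trans (h0 n hn)
    set T0 := hCfin.toFinset with hT0
    have hT0ne : T0.Nonempty := ⟨0, hCfin.mem_toFinset.2 h0C⟩
    set j0 := T0.max' hT0ne with hj0
    have hj0max : ∀ j ∈ C, j ≤ j0 := fun j hj => T0.le_max' j (hCfin.mem_toFinset.2 hj)
    have hblock : ∀ m, j0 ≤ m → (Finset.Icc j0 m).image f ∈ G := by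
      intro m hm
      obtain ⟨n, hn, hagree⟩ := key (m + 1) (m + 1)
      have hmn : m < n := lt_of_lt_of_le (Nat.lt_succ_self m) hn
      have hfm : f m ∈ Finset.univ.biUnion (Gs n) := by
        rw [← hH n]; exact Finset.mem_image_of_mem f (Finset.mem_range.2 hmn)
      obtain ⟨i, -, hmi⟩ := Finset.mem_biUnion.1 hfm
      have hminsi : mins n i ∈ (Finset.range n).image f := by
        rw [hH n]; exact Finset.mem_biUnion.2 ⟨i, Finset.mem_univ i, h2 n i⟩
      obtain ⟨c, hcn, hc⟩ := Finset.mem_image.1 hminsi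
      have hcm : c ≤ m := by
        have hle : f c ≤ f m := by rw [hc]; exact h3 n i _ hmi
        exact hf.le_iff_le.1 hle
      have hcC : c ∈ C := by
        have h1' : seq n c = true := by
          rw [hseq]; simp only [decide_eq_true_eq]
          exact ⟨Finset.mem_range.1 hcn, i, hc⟩
        exact (hagree c (Nat.lt_succ_of_le hcm)).symm.trans h1'
      have hcj0 : c ≤ j0 := hj0max c hcC
      refine hGh _ (h1 n i) _ fun a ha => ?_
      obtain ⟨l, hl, rfl⟩ := Finset.mem_image.1 ha
      obtain ⟨hl1, hl2⟩ := Finset.mem_Icc.1 hl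
      have hfl : f l ∈ Finset.univ.biUnion (Gs n) := by
        rw [← hH n]
        exact Finset.mem_image_of_mem f (Finset.mem_range.2 (lt_of_le_of_lt hl2 hmn))
      obtain ⟨i', -, hli'⟩ := Finset.mem_biUnion.1 hfl
      rcases lt_trichotomy i' i with hlt' | heq | hgt'
      · exfalso
        have hv : f l < mins n i := h4 n i' i hlt' _ hli' _ (h2 n i)
        rw [← hc] at hv
        have : l < c := hf.lt_iff_lt.1 hv
        omega
      · rw [← heq]; exact hli'
      · exfalso
        have hv : f m < f l := h4 n i i' hgt' _ hmi _ hli'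
        have : m < l := hf.lt_iff_lt.1 hv
        omega
    apply not_hasBadSeq hGc
    refine ⟨fun r => f (j0 + r), hf.comp (fun a b h => by omega), fun r => ?_⟩
    refine hGh _ (hblock (j0 + r) (Nat.le_add_right _ _)) _ fun a ha => ?_
    obtain ⟨i, hi, rfl⟩ := Finset.mem_image.1 ha
    refine Finset.mem_image_of_mem f (Finset.mem_Icc.2 ⟨Nat.le_add_right _ _, ?_⟩)
    exact Nat.add_le_add_left (le_of_lt (Finset.mem_range.1 hi)) j0

/-- If `F` and `G` are regular families then so is `F[G]`. -/
theorem isRegular_famComp (F G : Set (Finset ℕ))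
    (hF : IsRegularFam F) (hG : IsRegularFam G) :
    IsRegularFam (famComp F G) := by
  obtain ⟨hFh, hFs, hFc⟩ := hF
  obtain ⟨hGh, hGs, hGc⟩ := hG
  have hh := hereditary_famComp hFh hFs hGh
  refine ⟨hh, spreading_famComp hFs hGs, ?_⟩
  exact isClosed_of_not_bad hh (not_bad_famComp hFh hFc hGh hGc)
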